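/- For an irreducible recurrent Markov chain on a countable set V with stationary vector pi (pi p = pi, pi > 0), distinct vertices b,c, hitting function h = h_{b,c}, and escape probabilities e_{b,c} = P_b(T_c < T_b^+), suppose K_3 := 1 + (1/2)( d(b)+d(c) + sum_{u,v} d(u)p(u,v)|h(u)-h(v)| ) is finite. Then for any rotor walk and all t, | n_t(b)/pi(b) - n_t(c)/pi(c) | <= K_3/(pi(b) e_{b,c}). -/

import Mathlib

open scoped BigOperators Classical

/-- `(x, r)` is a rotor walk for the rotor mechanism `(d, succ)`.  Rotor values are
`0`-based: rotor value `j` at `u` means the rotor points to `succ u j`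
(corresponding to `u^(j+1)` in `1`-based notation).  At each step the rotor at the
current particle position is incremented cyclically and the particle moves in the
new rotor direction. -/
def IsRotorWalk {V : Type*} (d : V → ℕ) (succ : V → ℕ → V)
    (x : ℕ → V) (r : ℕ → V → ℕ) : Prop :=
  (∀ v, r 0 v < d v) ∧
  (∀ t, r (t + 1) (x t) = (r t (x t) + 1) % d (x t)) ∧
  (∀ t v, v ≠ x t → r (t + 1) v = r t v) ∧
  (∀ t, x (t + 1) = succ (x t) (r (t + 1) (x t)))

/-- the number of visits of the walk `x` to `v` strictly before time `t` -/
noncomputable def nvisits {V : Type*} (x : ℕ → V) (t : ℕ) (v : V) : ℕ :=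
  ((Finset.range t).filter fun s => x s = v).card

/-- the rotor mechanism `(d, succ)` realizes the transition kernel `p`:
`p u v` is the proportion of the `d u` successors of `u` equal to `v` -/
def Realizes {V : Type*} (d : V → ℕ) (succ : V → ℕ → V) (p : V → V → ℝ) : Prop :=
  (∀ u, 0 < d u) ∧
  ∀ u v, p u v = ((Finset.range (d u)).filter fun i => succ u i = v).card / d u

/-- `hitAux p b c t v` is the probability, for the Markov chain with kernel `p`
started at `v`, of hitting `b` before hitting `c` and within `t` steps. -/
noncomputable def hitAux {V : Type*} (p : V → V → ℝ) (b c : V) : ℕ → V → ℝ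
  | 0, v => if v = b then 1 else 0
  | t + 1, v => if v = b then 1 else if v = c then 0 else ∑' w, p v w * hitAux p b c t w

/-- the hitting probability `h_{b,c}(v) = P_v(T_b < T_c)`, as the monotone limit of the
probabilities of hitting `b` before `c` within `t` steps.  (Taking `b = c` gives the
single-target hitting probability `P_v(T_b < ∞)`.) -/
noncomputable def hitProb {V : Type*} (p : V → V → ℝ) (b c : V) (v : V) : ℝ :=
  ⨆ t, hitAux p b c t v

/-- the escape probability `e_{u,v} = P_u(T_v < T_u^+)`: a first step from `u` to `w`,
then hit `v` before `u`. -/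
noncomputable def escProb {V : Type*} (p : V → V → ℝ) (u v : V) : ℝ :=
  ∑' w, p u w * hitProb p v u w

/-- irreducibility of the kernel: any vertex can be reached from any other by a path of
positive-probability steps -/
def IrreducibleKernel {V : Type*} (p : V → V → ℝ) : Prop :=
  ∀ u v : V, ∃ (n : ℕ) (f : ℕ → V), f 0 = u ∧ f n = v ∧ ∀ i < n, 0 < p (f i) (f (i + 1))

/-- recurrence: `P_v(T_v^+ < ∞) = 1` for every `v` -/
def RecurrentKernel {V : Type*} (p : V → V → ℝ) : Prop :=
  ∀ v : V, ∑' w, p v w * hitProb p v v w = 1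

section Aux
variable {V : Type*} {d : V → ℕ} {succ : V → ℕ → V} {p : V → V → ℝ}

lemma Realizes.nonneg (hreal : Realizes d succ p) (u v : V) : 0 ≤ p u v := by
  rw [hreal.2]; positivity

lemma Realizes.eq_zero_of_not_mem (hreal : Realizes d succ p) {u v : V}
    (hv : v ∉ (Finset.range (d u)).image (succ u)) : p u v = 0 := by
  classical
  rw [hreal.2]
  have h0 : (Finset.range (d u)).filter (fun i => succ u i = v) = ∅ := by
    ext i
    simp only [Finset.mem_filter, Finset.mem_range, Finset.notMem_empty, iff_false, not_and]
    rintro hi rfl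
    exact hv (Finset.mem_image_of_mem _ (Finset.mem_range.mpr hi))
  simp [h0]

lemma Realizes.summable_mul (hreal : Realizes d succ p) (u : V) (f : V → ℝ) :
    Summable (fun v => p u v * f v) :=
  summable_of_ne_finset_zero (s := (Finset.range (d u)).image (succ u))
    (fun v hv => by rw [hreal.eq_zero_of_not_mem hv, zero_mul])

lemma Realizes.tsum_mul (hreal : Realizes d succ p) (u : V) (f : V → ℝ) :
    ∑' v, p u v * f v = (∑ i ∈ Finset.range (d u), f (succ u i)) / d u := by
  classical
  rw [tsum_eq_sum (s := (Finset.range (d u)).image (succ u))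
    (fun v hv => by rw [hreal.eq_zero_of_not_mem hv, zero_mul])]
  rw [Finset.sum_comp f (succ u), Finset.sum_div]
  refine Finset.sum_congr rfl fun v _ => ?_
  rw [hreal.2, nsmul_eq_mul, div_mul_eq_mul_div]

lemma Realizes.tsum_row (hreal : Realizes d succ p) (u : V) : ∑' v, p u v = 1 := by
  have := hreal.tsum_mul u (fun _ => 1)
  simp only [mul_one, Finset.sum_const, Finset.card_range, nsmul_eq_mul] at this
  rw [this, div_self]
  exact_mod_cast (hreal.1 u).ne'

end Aux

section Hit
variable {V : Type*} {d : V → ℕ} {succ : V → ℕ → V} {p : V → V → ℝ} {b c : V}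

lemma hitAux_succ (p : V → V → ℝ) (b c : V) (t : ℕ) (v : V) :
    hitAux p b c (t + 1) v =
      if v = b then 1 else if v = c then 0 else ∑' w, p v w * hitAux p b c t w := rfl

lemma hitAux_zero (p : V → V → ℝ) (b c : V) (v : V) :
    hitAux p b c 0 v = if v = b then 1 else 0 := rfl

lemma hitAux_nonneg (hreal : Realizes d succ p) :
    ∀ (t : ℕ) (v : V), 0 ≤ hitAux p b c t v := by
  intro t
  induction t with
  | zero => intro v; rw [hitAux_zero]; split <;> norm_num
  | succ t ih =>
    intro v
    rw [hitAux_succ]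
    split
    · norm_num
    split
    · norm_num
    · exact tsum_nonneg fun w => mul_nonneg (hreal.nonneg v w) (ih w)

lemma hitAux_le_one (hreal : Realizes d succ p) :
    ∀ (t : ℕ) (v : V), hitAux p b c t v ≤ 1 := by
  intro t
  induction t with
  | zero => intro v; rw [hitAux_zero]; split <;> norm_num
  | succ t ih =>
    intro v
    rw [hitAux_succ]
    split
    · norm_num
    split
    · norm_num
    · rw [hreal.tsum_mul]
      rw [div_le_one (by exact_mod_cast hreal.1 v)]
      calc (∑ i ∈ Finset.range (d v), hitAux p b c t (succ v i))
          ≤ ∑ i ∈ Finset.range (d v), 1 := Finset.sum_le_sum fun i _ => ih _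
        _ = (d v : ℝ) := by simp

lemma hitAux_mono (hreal : Realizes d succ p) :
    ∀ (t : ℕ) (v : V), hitAux p b c t v ≤ hitAux p b c (t + 1) v := by
  intro t
  induction t with
  | zero =>
    intro v
    rw [hitAux_zero, hitAux_succ]
    split
    · norm_num
    · split
      · norm_num
      · exact tsum_nonneg fun w => mul_nonneg (hreal.nonneg v w)
          (hitAux_nonneg hreal 0 w)
  | succ t ih =>
    intro v
    rw [hitAux_succ, hitAux_succ]
    split
    · norm_num
    split
    · norm_num
    · rw [hreal.tsum_mul, hreal.tsum_mul]
      exact div_le_div_of_nonneg_right (Finset.sum_le_sum fun i _ => ih _)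
        (by positivity)

end Hit

section Hit2
variable {V : Type*} {d : V → ℕ} {succ : V → ℕ → V} {p : V → V → ℝ} {b c : V}

lemma hitAux_mono' (hreal : Realizes d succ p) (v : V) :
    Monotone fun t => hitAux p b c t v :=
  monotone_nat_of_le_succ fun t => hitAux_mono hreal t v

lemma hitAux_bdd (hreal : Realizes d succ p) (v : V) :
    BddAbove (Set.range fun t => hitAux p b c t v) :=
  ⟨1, by rintro y ⟨t, rfl⟩; exact hitAux_le_one hreal t v⟩

lemma tendsto_hitAux (hreal : Realizes d succ p) (v : V) :
    Filter.Tendsto (fun t => hitAux p b c t v) Filter.atTop (nhds (hitProb p b c v)) :=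
  tendsto_atTop_ciSup (hitAux_mono' hreal v) (hitAux_bdd hreal v)

lemma hitAux_le_hitProb (hreal : Realizes d succ p) (t : ℕ) (v : V) :
    hitAux p b c t v ≤ hitProb p b c v :=
  le_ciSup (hitAux_bdd hreal v) t

lemma hitProb_nonneg (hreal : Realizes d succ p) (v : V) : 0 ≤ hitProb p b c v :=
  le_trans (hitAux_nonneg hreal 0 v) (hitAux_le_hitProb hreal 0 v)

lemma hitProb_le_one (hreal : Realizes d succ p) (v : V) : hitProb p b c v ≤ 1 :=
  ciSup_le fun t => hitAux_le_one hreal t v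

lemma hitAux_base (t : ℕ) : hitAux p b c t b = 1 := by
  cases t with
  | zero => simp [hitAux_zero]
  | succ t => simp [hitAux_succ]

lemma hitProb_base : hitProb p b c b = 1 := by
  unfold hitProb
  simp only [hitAux_base]
  exact ciSup_const

lemma hitAux_target (hcb : c ≠ b) (t : ℕ) : hitAux p b c t c = 0 := by
  cases t with
  | zero => simp [hitAux_zero, hcb]
  | succ t => simp [hitAux_succ, hcb]

lemma hitProb_target (hcb : c ≠ b) : hitProb p b c c = 0 := by
  unfold hitProb
  simp only [hitAux_target hcb]
  exact ciSup_const

/-- harmonicity away from `b`, `c`, in finite-sum form -/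
lemma hitProb_harmonic_sum (hreal : Realizes d succ p) {v : V} (hvb : v ≠ b) (hvc : v ≠ c) :
    hitProb p b c v = (∑ i ∈ Finset.range (d v), hitProb p b c (succ v i)) / d v := by
  have h1 : Filter.Tendsto (fun t => hitAux p b c (t + 1) v) Filter.atTop
      (nhds (hitProb p b c v)) :=
    (tendsto_hitAux hreal v).comp (Filter.tendsto_add_atTop_nat 1)
  have h2 : Filter.Tendsto (fun t => hitAux p b c (t + 1) v) Filter.atTop
      (nhds ((∑ i ∈ Finset.range (d v), hitProb p b c (succ v i)) / d v)) := by
    have : ∀ t, hitAux p b c (t + 1) v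
        = (∑ i ∈ Finset.range (d v), hitAux p b c t (succ v i)) / d v := by
      intro t
      rw [hitAux_succ, if_neg hvb, if_neg hvc, hreal.tsum_mul]
    simp only [this]
    exact (tendsto_finset_sum _ fun i _ => tendsto_hitAux hreal _).div_const _
  exact tendsto_nhds_unique h1 h2

/-- harmonicity away from `b`, `c`, in tsum form -/
lemma hitProb_harmonic (hreal : Realizes d succ p) {v : V} (hvb : v ≠ b) (hvc : v ≠ c) :
    hitProb p b c v = ∑' w, p v w * hitProb p b c w := by
  rw [hreal.tsum_mul, hitProb_harmonic_sum hreal hvb hvc]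

end Hit2

section Rec
variable {V : Type*} {d : V → ℕ} {succ : V → ℕ → V} {p : V → V → ℝ} {b c : V}

lemma Realizes.exists_succ_of_pos (hreal : Realizes d succ p) {u w : V} (hw : 0 < p u w) :
    ∃ i < d u, succ u i = w := by
  by_contra hcon
  push_neg at hcon
  refine absurd (hreal.eq_zero_of_not_mem ?_) (ne_of_gt hw)
  simp only [Finset.mem_image, Finset.mem_range, not_exists]
  rintro i ⟨hi, rfl⟩
  exact absurd rfl (hcon i hi)

/-- if a `p`-average of a function bounded by `1` equals `1`, the function is `1`
on the support of the row -/
lemma Realizes.forcing (hreal : Realizes d succ p) {u : V} {f : V → ℝ}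
    (havg : ∑' w, p u w * f w = 1) (hle : ∀ w, f w ≤ 1) :
    ∀ w, 0 < p u w → f w = 1 := by
  intro w hw
  obtain ⟨i, hi, rfl⟩ := hreal.exists_succ_of_pos hw
  rw [hreal.tsum_mul, div_eq_one_iff_eq (by exact_mod_cast (hreal.1 u).ne')] at havg
  by_contra hne
  have hlt : f (succ u i) < 1 := lt_of_le_of_ne (hle _) hne
  have : (∑ j ∈ Finset.range (d u), f (succ u j)) < ∑ j ∈ Finset.range (d u), 1 :=
    Finset.sum_lt_sum (fun j _ => hle _) ⟨i, Finset.mem_range.mpr hi, hlt⟩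
  simp only [Finset.sum_const, Finset.card_range, nsmul_eq_mul, mul_one] at this
  rw [havg] at this
  exact absurd this (lt_irrefl _)

/-- recurrence plus irreducibility: the chain hits any fixed vertex `b` a.s. -/
lemma hitProb_self_eq_one (hreal : Realizes d succ p)
    (hirr : IrreducibleKernel p) (hrec : RecurrentKernel p) (b v : V) :
    hitProb p b b v = 1 := by
  have hstep : ∀ u w : V, hitProb p b b u = 1 → 0 < p u w → hitProb p b b w = 1 := by
    intro u w hu hw
    by_cases hub : u = b
    · subst hub
      exact hreal.forcing (hrec u) (fun w => hitProb_le_one hreal w) w hw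
    · have havg : ∑' w', p u w' * hitProb p b b w' = 1 := by
        rw [← hitProb_harmonic hreal hub hub, hu]
      exact hreal.forcing havg (fun w => hitProb_le_one hreal w) w hw
  obtain ⟨n, g, hg0, hgn, hgs⟩ := hirr b v
  have : ∀ i ≤ n, hitProb p b b (g i) = 1 := by
    intro i hi
    induction i with
    | zero => rw [hg0]; exact hitProb_base
    | succ i ih =>
      exact hstep _ _ (ih (le_trans (Nat.le_succ i) hi)) (hgs i (Nat.lt_of_succ_le hi))
  rw [← hgn]
  exact this n le_rfl

lemma hitAux_self_le_add (hreal : Realizes d succ p) (hbc : b ≠ c) :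
    ∀ (t : ℕ) (v : V), hitAux p b b t v ≤ hitAux p b c t v + hitAux p c b t v := by
  intro t
  induction t with
  | zero =>
    intro v
    simp only [hitAux_zero]
    split
    · norm_num
      split <;> norm_num
    · positivity
  | succ t ih =>
    intro v
    by_cases hvb : v = b
    · subst hvb
      rw [hitAux_base, hitAux_base, hitAux_target hbc]
      norm_num
    by_cases hvc : v = c
    · subst hvc
      rw [hitAux_target (Ne.symm hbc), hitAux_base]
      rw [hitAux_succ, if_neg hvb, if_neg hvb, hreal.tsum_mul]
      rw [div_le_iff₀ (by exact_mod_cast hreal.1 v)]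
      calc (∑ i ∈ Finset.range (d v), hitAux p b b t (succ v i))
          ≤ ∑ i ∈ Finset.range (d v), 1 := Finset.sum_le_sum fun i _ => hitAux_le_one hreal _ _
        _ = (d v : ℝ) := by simp
        _ ≤ (0 + 1) * d v := by norm_num
    · simp only [hitAux_succ, if_neg hvb, if_neg hvc, hreal.tsum_mul]
      rw [← add_div]
      refine div_le_div_of_nonneg_right ?_ (by positivity)
      rw [← Finset.sum_add_distrib]
      exact Finset.sum_le_sum fun i _ => ih _
end Rec

section Comp
variable {V : Type*} {d : V → ℕ} {succ : V → ℕ → V} {p : V → V → ℝ} {b c : V}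

lemma hitAux_add_le_one (hreal : Realizes d succ p) (hbc : b ≠ c) :
    ∀ (t : ℕ) (v : V), hitAux p b c t v + hitAux p c b t v ≤ 1 := by
  intro t
  induction t with
  | zero =>
    intro v
    simp only [hitAux_zero]
    split
    · rename_i hv
      subst hv
      rw [if_neg hbc]; norm_num
    · split <;> norm_num
  | succ t ih =>
    intro v
    by_cases hvb : v = b
    · subst hvb
      rw [hitAux_base, hitAux_target hbc]; norm_num
    by_cases hvc : v = c
    · subst hvc
      rw [hitAux_base, hitAux_target (Ne.symm hbc)]; norm_num
    · simp only [hitAux_succ, if_neg hvb, if_neg hvc, hreal.tsum_mul]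
      rw [← add_div, div_le_one (by exact_mod_cast hreal.1 v), ← Finset.sum_add_distrib]
      calc (∑ i ∈ Finset.range (d v), (hitAux p b c t (succ v i) + hitAux p c b t (succ v i)))
          ≤ ∑ i ∈ Finset.range (d v), 1 := Finset.sum_le_sum fun i _ => ih _
        _ = (d v : ℝ) := by simp

lemma hitProb_add_eq_one (hreal : Realizes d succ p)
    (hirr : IrreducibleKernel p) (hrec : RecurrentKernel p) (hbc : b ≠ c) (v : V) :
    hitProb p b c v + hitProb p c b v = 1 := by
  refine le_antisymm ?_ ?_
  · have h1 : Filter.Tendsto (fun t => hitAux p b c t v + hitAux p c b t v) Filter.atTop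
        (nhds (hitProb p b c v + hitProb p c b v)) :=
      (tendsto_hitAux hreal v).add (tendsto_hitAux hreal v)
    exact le_of_tendsto h1 (Filter.Eventually.of_forall fun t => hitAux_add_le_one hreal hbc t v)
  · rw [← hitProb_self_eq_one hreal hirr hrec b v]
    refine ciSup_le fun t => ?_
    exact le_trans (hitAux_self_le_add hreal hbc t v)
      (add_le_add (hitAux_le_hitProb hreal t v) (hitAux_le_hitProb hreal t v))

lemma escProb_eq (hreal : Realizes d succ p)
    (hirr : IrreducibleKernel p) (hrec : RecurrentKernel p) (hbc : b ≠ c) :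
    escProb p b c = 1 - ∑' w, p b w * hitProb p b c w := by
  unfold escProb
  rw [hreal.tsum_mul, hreal.tsum_mul, eq_sub_iff_add_eq, ← add_div,
    ← Finset.sum_add_distrib]
  have : ∀ i ∈ Finset.range (d b),
      hitProb p c b (succ b i) + hitProb p b c (succ b i) = 1 := by
    intro i _
    rw [add_comm]
    exact hitProb_add_eq_one hreal hirr hrec hbc _
  rw [Finset.sum_congr rfl this]
  simp only [Finset.sum_const, Finset.card_range, nsmul_eq_mul, mul_one]
  rw [div_self (by exact_mod_cast (hreal.1 b).ne')]

/-- positivity of the escape probability -/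
lemma escProb_pos (hreal : Realizes d succ p)
    (hirr : IrreducibleKernel p) (hbc : b ≠ c) : 0 < escProb p b c := by
  -- first, a path from b to c; take the part after the last visit to b
  obtain ⟨n, g, hg0, hgn, hgs⟩ := hirr b c
  classical
  -- auxiliary claim: a positive path to c avoiding b gives positive hitAux
  have key : ∀ (m : ℕ) (w : V), w ≠ b →
      (∃ g' : ℕ → V, g' 0 = w ∧ g' m = c ∧ (∀ i < m, 0 < p (g' i) (g' (i+1))) ∧
        (∀ i ≤ m, g' i ≠ b)) → 0 < hitAux p c b m w := by
    intro m
    induction m with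
    | zero =>
      rintro w hwb ⟨g', hg'0, hg'm, -, -⟩
      rw [hitAux_zero, if_pos (hg'0 ▸ hg'm ▸ rfl)]
      norm_num
    | succ m ihm =>
      rintro w hwb ⟨g', hg'0, hg'm, hg's, hg'b⟩
      by_cases hwc : w = c
      · rw [hwc, hitAux_base]
        norm_num
      · rw [hitAux_succ, if_neg hwc, if_neg hwb]
        have hsum : Summable fun w' => p w w' * hitAux p c b m w' :=
          hreal.summable_mul w _
        refine Summable.tsum_pos hsum (fun w' => mul_nonneg (hreal.nonneg w w')
          (hitAux_nonneg hreal m w')) (g' 1) ?_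
        have h1 : 0 < p w (g' 1) := hg'0 ▸ hg's 0 (Nat.succ_pos m)
        refine mul_pos h1 ?_
        refine ihm (g' 1) (hg'b 1 (by omega)) ?_
        exact ⟨fun i => g' (i + 1), rfl, hg'm, fun i hi => hg's (i+1) (by omega),
          fun i hi => hg'b (i+1) (by omega)⟩
  -- extract the suffix after the last b
  obtain ⟨i, hin, hib, hilast⟩ : ∃ i, i ≤ n ∧ g i = b ∧ ∀ j, i < j → j ≤ n → g j ≠ b := by
    refine ⟨Nat.findGreatest (fun i => g i = b) n, Nat.findGreatest_le n,
      Nat.findGreatest_spec (P := fun i => g i = b) (Nat.zero_le n) hg0, ?_⟩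
    intro j hij hjn hjb
    exact absurd (Nat.le_findGreatest hjn hjb) (Nat.not_le.mpr hij)
  have hic : i < n := by
    rcases Nat.lt_or_ge i n with h | h
    · exact h
    · exfalso
      have : i = n := le_antisymm hin h
      rw [this, hgn] at hib
      exact hbc hib.symm
  -- now: escProb p b c = ∑ p b w * hitProb p c b w ≥ p b (g (i+1)) * hitProb ... > 0
  unfold escProb
  have hsum : Summable fun w => p b w * hitProb p c b w := hreal.summable_mul b _
  refine Summable.tsum_pos hsum (fun w => mul_nonneg (hreal.nonneg b w)
    (hitProb_nonneg hreal w)) (g (i+1)) ?_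
  have h1 : 0 < p b (g (i+1)) := hib ▸ hgs i hic
  refine mul_pos h1 ?_
  by_cases hgc : g (i+1) = c
  · rw [hgc, hitProb_base]; norm_num
  · have hpos : 0 < hitAux p c b (n - (i+1)) (g (i+1)) := by
      refine key _ _ (hilast (i+1) (Nat.lt_succ_self i) (by omega)) ?_
      refine ⟨fun j => g (i + 1 + j), rfl, ?_, fun j hj => ?_, fun j hj => ?_⟩
      · show g (i + 1 + (n - (i+1))) = c
        rw [show i + 1 + (n - (i+1)) = n from by omega, hgn]
      · dsimp only at hj ⊢
        have := hgs (i + 1 + j) (by omega)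
        convert this using 3 <;> omega
      · exact hilast (i + 1 + j) (by omega) (by omega)
    exact lt_of_lt_of_le hpos (hitAux_le_hitProb hreal _ _)

end Comp

section Flux
variable {V : Type*} {d : V → ℕ} {succ : V → ℕ → V} {p : V → V → ℝ} {b c : V}

lemma row_nonneg (hreal : Realizes d succ p) (u : V) (n : ℕ) :
    0 ≤ ∑' w, p u w * hitAux p b c n w :=
  tsum_nonneg fun w => mul_nonneg (hreal.nonneg u w) (hitAux_nonneg hreal n w)

lemma row_le_one (hreal : Realizes d succ p) (u : V) (n : ℕ) :
    ∑' w, p u w * hitAux p b c n w ≤ 1 := by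
  rw [hreal.tsum_mul, div_le_one (by exact_mod_cast hreal.1 u)]
  calc (∑ i ∈ Finset.range (d u), hitAux p b c n (succ u i))
      ≤ ∑ i ∈ Finset.range (d u), 1 := Finset.sum_le_sum fun i _ => hitAux_le_one hreal _ _
    _ = (d u : ℝ) := by simp

lemma tendsto_row (hreal : Realizes d succ p) (u : V) :
    Filter.Tendsto (fun n => ∑' w, p u w * hitAux p b c n w) Filter.atTop
      (nhds (∑' w, p u w * hitProb p b c w)) := by
  simp only [hreal.tsum_mul]
  exact (tendsto_finset_sum _ fun i _ => tendsto_hitAux hreal _).div_const _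

/-- the key flux inequality `π c ⬝ e_{c,b} ≤ π b ⬝ e_{b,c}`, by a truncation argument -/
lemma flux_le (hreal : Realizes d succ p)
    (hirr : IrreducibleKernel p) (hrec : RecurrentKernel p)
    {π : V → ℝ} (hπpos : ∀ v, 0 < π v)
    (hπ : ∀ v, HasSum (fun u => π u * p u v) (π v)) (hbc : b ≠ c) :
    π c * escProb p c b ≤ π b * escProb p b c := by
  classical
  set PiE : V → ENNReal := fun v => ENNReal.ofReal (π v) with hPiE
  set P : V → V → ENNReal := fun u v => ENNReal.ofReal (p u v) with hP
  set A : ℕ → V → ENNReal := fun n v => ENNReal.ofReal (hitAux p b c n v) with hA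
  set S : ℕ → V → ℝ := fun n v => ∑' w, p v w * hitAux p b c n w with hS
  set δ : ℕ → ℝ := fun n => 1 - S n b with hδ
  have hδ0 : ∀ n, 0 ≤ δ n := fun n => by
    simp only [hδ, sub_nonneg]; exact row_le_one hreal b n
  have hS0 : ∀ n v, 0 ≤ S n v := fun n v => row_nonneg hreal v n
  set H : ℕ → ENNReal := fun n => ∑' v, PiE v * A n v with hH
  -- (f1) stationarity in ENNReal
  have f1 : ∀ v, ∑' u, PiE u * P u v = PiE v := by
    intro v
    have hsumm : Summable fun u => π u * p u v := (hπ v).summable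
    have h0 := ENNReal.ofReal_tsum_of_nonneg
      (fun u => mul_nonneg (hπpos u).le (hreal.nonneg u v)) hsumm
    rw [(hπ v).tsum_eq] at h0
    calc ∑' u, PiE u * P u v = ∑' u, ENNReal.ofReal (π u * p u v) := by
          congr 1; funext u; exact (ENNReal.ofReal_mul (hπpos u).le).symm
      _ = PiE v := h0.symm
  -- (f2) row sums in ENNReal
  have f2 : ∀ (u : V) (n : ℕ), ∑' w, P u w * A n w = ENNReal.ofReal (S n u) := by
    intro u n
    rw [hS]
    rw [ENNReal.ofReal_tsum_of_nonneg
      (fun w => mul_nonneg (hreal.nonneg u w) (hitAux_nonneg hreal n w))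
      (hreal.summable_mul u _)]
    congr 1
    funext w
    rw [ENNReal.ofReal_mul (hreal.nonneg u w)]
  -- (f3) pointwise recursion identity in ENNReal
  have f3 : ∀ (n : ℕ) (v : V),
      PiE v * A (n+1) v + (if v = c then PiE c * ENNReal.ofReal (S n c) else 0)
        = (if v = b then PiE b * ENNReal.ofReal (δ n) else 0)
          + PiE v * ENNReal.ofReal (S n v) := by
    intro n v
    by_cases hvb : v = b
    · subst hvb
      have hA1 : A (n+1) v = ENNReal.ofReal 1 := by simp [hA, hitAux_succ]
      rw [hA1, if_neg hbc, if_pos rfl, add_zero, ← mul_add,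
        ← ENNReal.ofReal_add (hδ0 n) (hS0 n v)]
      congr 2
      simp only [hδ]
      ring
    by_cases hvc : v = c
    · subst hvc
      have hA0 : A (n+1) v = 0 := by simp [hA, hitAux_succ, hvb]
      rw [hA0, mul_zero, zero_add, if_pos rfl, if_neg hvb, zero_add]
    · rw [if_neg hvb, if_neg hvc, add_zero, zero_add]
      congr 1
      rw [hA]
      simp only [hitAux_succ, if_neg hvb, if_neg hvc]
      rfl
  -- (f4) summing the recursion
  have f4 : ∀ n, H (n+1) + PiE c * ENNReal.ofReal (S n c)
      = PiE b * ENNReal.ofReal (δ n) + H n := by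
    intro n
    have lhs : ∑' v, (PiE v * A (n+1) v + (if v = c then PiE c * ENNReal.ofReal (S n c) else 0))
        = H (n+1) + PiE c * ENNReal.ofReal (S n c) := by
      rw [ENNReal.tsum_add, tsum_ite_eq]
    have rhs : ∑' v, ((if v = b then PiE b * ENNReal.ofReal (δ n) else 0)
        + PiE v * ENNReal.ofReal (S n v))
        = PiE b * ENNReal.ofReal (δ n) + ∑' v, PiE v * ENNReal.ofReal (S n v) := by
      rw [ENNReal.tsum_add, tsum_ite_eq]
    have mid : ∑' v, PiE v * ENNReal.ofReal (S n v) = H n := by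
      calc ∑' v, PiE v * ENNReal.ofReal (S n v)
          = ∑' v, PiE v * ∑' w, P v w * A n w := by
            congr 1; funext v; rw [f2]
        _ = ∑' v, ∑' w, PiE v * (P v w * A n w) := by
            congr 1; funext v; rw [ENNReal.tsum_mul_left]
        _ = ∑' w, ∑' v, PiE v * (P v w * A n w) := ENNReal.tsum_comm
        _ = ∑' w, ∑' v, (PiE v * P v w) * A n w := by
            congr 1; funext w; congr 1; funext v; ring
        _ = ∑' w, (∑' v, PiE v * P v w) * A n w := by
            congr 1; funext w; rw [ENNReal.tsum_mul_right]
        _ = ∑' w, PiE w * A n w := by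
            congr 1; funext w; rw [f1]
        _ = H n := rfl
    calc H (n+1) + PiE c * ENNReal.ofReal (S n c)
        = ∑' v, (PiE v * A (n+1) v + (if v = c then PiE c * ENNReal.ofReal (S n c) else 0)) :=
          lhs.symm
      _ = ∑' v, ((if v = b then PiE b * ENNReal.ofReal (δ n) else 0)
            + PiE v * ENNReal.ofReal (S n v)) := by
          congr 1; funext v; exact f3 n v
      _ = PiE b * ENNReal.ofReal (δ n) + H n := by rw [rhs, mid]
  -- (f5) H 0 = PiE b
  have f5 : H 0 = PiE b := by
    rw [hH]
    have : ∀ v, PiE v * A 0 v = if v = b then PiE b else 0 := by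
      intro v
      rw [hA]
      by_cases hvb : v = b
      · subst hvb; simp [hitAux_zero]
      · simp [hitAux_zero, hvb]
    simp only [this]
    exact tsum_ite_eq b (fun _ => PiE b)
  -- (f6) H n is finite
  have f6 : ∀ n, H n ≠ ⊤ := by
    intro n
    induction n with
    | zero => rw [f5]; exact ENNReal.ofReal_ne_top
    | succ n ih =>
      have hle : H (n+1) ≤ PiE b * ENNReal.ofReal (δ n) + H n := by
        rw [← f4 n]; exact le_self_add
      exact ne_top_of_le_ne_top (by
        exact ENNReal.add_ne_top.mpr ⟨ENNReal.mul_ne_top ENNReal.ofReal_ne_top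
          ENNReal.ofReal_ne_top, ih⟩) hle
  -- (f7) real recursion
  set Hr : ℕ → ℝ := fun n => (H n).toReal with hHr
  have f7 : ∀ n, Hr (n+1) + π c * S n c = π b * δ n + Hr n := by
    intro n
    have := congrArg ENNReal.toReal (f4 n)
    rw [ENNReal.toReal_add (f6 (n+1)) (ENNReal.mul_ne_top ENNReal.ofReal_ne_top
        ENNReal.ofReal_ne_top),
      ENNReal.toReal_add (ENNReal.mul_ne_top ENNReal.ofReal_ne_top ENNReal.ofReal_ne_top)
        (f6 n), ENNReal.toReal_mul, ENNReal.toReal_mul,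
      ENNReal.toReal_ofReal (hπpos c).le, ENNReal.toReal_ofReal (hπpos b).le,
      ENNReal.toReal_ofReal (hS0 n c), ENNReal.toReal_ofReal (hδ0 n)] at this
    exact this
  -- partial sums
  have f8 : ∀ N, ∑ k ∈ Finset.range N, (π b * δ k - π c * S k c) = Hr N - Hr 0 := by
    intro N
    induction N with
    | zero => simp
    | succ N ih =>
      rw [Finset.sum_range_succ, ih]
      have := f7 N
      ring_nf
      ring_nf at this
      linarith [this]
  -- limits
  have hδlim : Filter.Tendsto δ Filter.atTop (nhds (escProb p b c)) := by
    rw [escProb_eq hreal hirr hrec hbc]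
    exact (tendsto_const_nhds.sub (tendsto_row hreal b))
  have hSlim : Filter.Tendsto (fun n => S n c) Filter.atTop (nhds (escProb p c b)) := by
    have : escProb p c b = ∑' w, p c w * hitProb p b c w := rfl
    rw [this]
    exact tendsto_row hreal c
  have hterm : Filter.Tendsto (fun n => π b * δ n - π c * S n c) Filter.atTop
      (nhds (π b * escProb p b c - π c * escProb p c b)) :=
    ((tendsto_const_nhds.mul hδlim).sub (tendsto_const_nhds.mul hSlim))
  -- Cesàro
  have hces := hterm.cesaro
  have hz : Filter.Tendsto (fun n : ℕ => (n : ℝ)⁻¹ * (-(Hr 0))) Filter.atTop (nhds 0) := by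
    simpa using (tendsto_inv_atTop_nhds_zero_nat.mul_const (-(Hr 0)))
  have hle : ∀ n : ℕ, (n : ℝ)⁻¹ * (-(Hr 0))
      ≤ (n : ℝ)⁻¹ • ∑ i ∈ Finset.range n, (π b * δ i - π c * S i c) := by
    intro n
    rw [smul_eq_mul, f8 n]
    have h1 : -(Hr 0) ≤ Hr n - Hr 0 := by
      have : (0:ℝ) ≤ Hr n := ENNReal.toReal_nonneg
      linarith
    exact mul_le_mul_of_nonneg_left h1 (by positivity)
  have hfinal : (0:ℝ) ≤ π b * escProb p b c - π c * escProb p c b := by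
    have := le_of_tendsto_of_tendsto hz hces (Filter.Eventually.of_forall hle)
    simpa using this
  linarith
end Flux

section Rotor
variable {V : Type*} {d : V → ℕ} {succ : V → ℕ → V} {x : ℕ → V} {r : ℕ → V → ℕ}

lemma nvisits_zero (x : ℕ → V) (v : V) : nvisits x 0 v = 0 := by
  simp [nvisits]

lemma nvisits_succ (x : ℕ → V) (t : ℕ) (v : V) :
    nvisits x (t + 1) v = nvisits x t v + (if v = x t then 1 else 0) := by
  classical
  unfold nvisits
  rw [Finset.range_add_one, Finset.filter_insert]
  by_cases hxt : x t = v
  · rw [if_pos hxt, if_pos hxt.symm,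
      Finset.card_insert_of_notMem (by simp)]
  · rw [if_neg hxt, if_neg (Ne.symm hxt), add_zero]

lemma rotor_formula (hwalk : IsRotorWalk d succ x r) :
    ∀ t v, r t v = (r 0 v + nvisits x t v) % d v := by
  obtain ⟨h0, h1, h2, h3⟩ := hwalk
  intro t
  induction t with
  | zero => intro v; rw [nvisits_zero, Nat.add_zero, Nat.mod_eq_of_lt (h0 v)]
  | succ t ih =>
    intro v
    by_cases hv : v = x t
    · subst hv
      rw [h1 t, ih (x t), nvisits_succ, if_pos rfl, Nat.mod_add_mod, ← Nat.add_assoc]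
    · rw [h2 t v hv, ih v, nvisits_succ, if_neg hv, Nat.add_zero]

/-- a full cycle of `g ∘ (· % d)` starting anywhere sums to the sum of `g` -/
lemma cyc_sum (g : ℕ → ℝ) : ∀ (cst d : ℕ), 0 < d →
    ∑ j ∈ Finset.range d, g ((cst + j) % d) = ∑ i ∈ Finset.range d, g i := by
  have key : ∀ (cst d : ℕ), 0 < d →
      ∑ j ∈ Finset.range d, g ((cst + 1 + j) % d) = ∑ j ∈ Finset.range d, g ((cst + j) % d) := by
    intro cst d hd
    obtain ⟨n, rfl⟩ : ∃ n, d = n + 1 := ⟨d - 1, by omega⟩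
    rw [Finset.sum_range_succ (fun j => g ((cst + 1 + j) % (n+1))),
      Finset.sum_range_succ' (fun j => g ((cst + j) % (n+1)))]
    have h2 : (cst + 1 + n) % (n + 1) = (cst + 0) % (n + 1) := by
      simp [show cst + 1 + n = cst + (n + 1) from by omega, Nat.add_mod_right]
    rw [h2]
    congr 1
    refine Finset.sum_congr rfl fun j _ => ?_
    rw [show cst + (j + 1) = cst + 1 + j from by omega]
  intro cst
  induction cst with
  | zero =>
    intro d hd
    refine Finset.sum_congr rfl fun j hj => ?_
    rw [Nat.zero_add, Nat.mod_eq_of_lt (Finset.mem_range.mp hj)]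
  | succ cst ih =>
    intro d hd
    rw [show cst + 1 = cst + 1 from rfl, key cst d hd, ih d hd]

lemma subset_bound {T : Finset ℕ} {dd : ℕ} (g : ℕ → ℝ)
    (hT : T ⊆ Finset.range dd) (hg : ∑ i ∈ Finset.range dd, g i = 0) :
    |∑ i ∈ T, g i| ≤ (1/2) * ∑ i ∈ Finset.range dd, |g i| := by
  have hsplit : ∑ i ∈ T, g i + ∑ i ∈ Finset.range dd \ T, g i = 0 := by
    rw [Finset.sum_sdiff_eq_sub hT] at *
    · linarith [hg]
  have h1 : |∑ i ∈ T, g i| ≤ ∑ i ∈ T, |g i| := Finset.abs_sum_le_sum_abs _ _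
  have h2 : |∑ i ∈ T, g i| ≤ ∑ i ∈ Finset.range dd \ T, |g i| := by
    have : ∑ i ∈ T, g i = -∑ i ∈ Finset.range dd \ T, g i := by linarith
    rw [this, abs_neg]
    exact Finset.abs_sum_le_sum_abs _ _
  have h3 : ∑ i ∈ T, |g i| + ∑ i ∈ Finset.range dd \ T, |g i|
      = ∑ i ∈ Finset.range dd, |g i| := by
    rw [Finset.sum_sdiff_eq_sub hT]
    ring
  linarith

lemma drop_cycles (g : ℕ → ℝ) (cst dd : ℕ) (hd : 0 < dd)
    (hg : ∑ i ∈ Finset.range dd, g i = 0) :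
    ∀ k, ∑ j ∈ Finset.range k, g ((cst + j) % dd)
      = ∑ j ∈ Finset.range (k % dd), g ((cst + j) % dd) := by
  intro k
  induction k using Nat.strong_induction_on with
  | _ k ih =>
    by_cases hk : k < dd
    · rw [Nat.mod_eq_of_lt hk]
    · push_neg at hk
      obtain ⟨m, rfl⟩ : ∃ m, k = m + dd := ⟨k - dd, by omega⟩
      rw [Finset.sum_range_add, Nat.add_mod_right]
      have hcyc : ∑ j ∈ Finset.range dd, g ((cst + (m + j)) % dd) = 0 := by
        have := cyc_sum g (cst + m) dd hd
        simp only [← Nat.add_assoc] at this ⊢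
        rw [this, hg]
      rw [hcyc, add_zero]
      exact ih m (by omega)

lemma rot_bound (g : ℕ → ℝ) (cst dd : ℕ) (hd : 0 < dd)
    (hg : ∑ i ∈ Finset.range dd, g i = 0) (k : ℕ) :
    |∑ j ∈ Finset.range k, g ((cst + j) % dd)| ≤ (1/2) * ∑ i ∈ Finset.range dd, |g i| := by
  rw [drop_cycles g cst dd hd hg k]
  have hinj : Set.InjOn (fun j => (cst + j) % dd) (Finset.range (k % dd)) := by
    intro j1 hj1 j2 hj2 he
    simp only [Finset.coe_range, Set.mem_Iio] at hj1 hj2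
    have hmod : k % dd < dd := Nat.mod_lt _ hd
    have e1 : (cst + j1) % dd = (cst + j2) % dd := he
    have e2 : j1 % dd = j2 % dd := Nat.ModEq.add_left_cancel' cst e1
    rwa [Nat.mod_eq_of_lt (lt_trans hj1 hmod), Nat.mod_eq_of_lt (lt_trans hj2 hmod)] at e2
  rw [Finset.sum_image (fun a ha b hb => hinj (by simpa using ha) (by simpa using hb)) |>.symm]
  refine subset_bound g ?_ hg
  intro i hi
  simp only [Finset.mem_image] at hi
  obtain ⟨j, _, rfl⟩ := hi
  exact Finset.mem_range.mpr (Nat.mod_lt _ hd)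

end Rotor

section Telescope
variable {V : Type*} {d : V → ℕ} {succ : V → ℕ → V} {x : ℕ → V} {r : ℕ → V → ℕ}

lemma rotor_telescope (hwalk : IsRotorWalk d succ x r) (φ : V → ℝ) :
    ∀ (t : ℕ) (F : Finset V), (∀ s, s < t → x s ∈ F) →
    φ (x t) - φ (x 0) = ∑ u ∈ F, ∑ j ∈ Finset.range (nvisits x t u),
      (φ (succ u ((r 0 u + 1 + j) % d u)) - φ u) := by
  intro t
  induction t with
  | zero =>
    intro F _
    simp [nvisits_zero]
  | succ t ih =>
    intro F hF
    have hFt : ∀ s, s < t → x s ∈ F := fun s hs => hF s (by omega)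
    have hxt : x t ∈ F := hF t (by omega)
    have key : ∀ u ∈ F, ∑ j ∈ Finset.range (nvisits x (t+1) u),
        (φ (succ u ((r 0 u + 1 + j) % d u)) - φ u)
        = (∑ j ∈ Finset.range (nvisits x t u), (φ (succ u ((r 0 u + 1 + j) % d u)) - φ u))
          + (if u = x t then φ (x (t+1)) - φ (x t) else 0) := by
      intro u _
      by_cases hu : u = x t
      · subst hu
        rw [nvisits_succ, if_pos rfl, if_pos rfl, Finset.sum_range_succ]
        have hstep : x (t+1) = succ (x t) ((r 0 (x t) + 1 + nvisits x t (x t)) % d (x t)) := by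
          rw [hwalk.2.2.2 t, rotor_formula hwalk (t+1) (x t), nvisits_succ, if_pos rfl]
          congr 2
          omega
        rw [hstep]
      · rw [nvisits_succ, if_neg hu, if_neg hu, Nat.add_zero, add_zero]
    rw [Finset.sum_congr rfl key, Finset.sum_add_distrib, Finset.sum_ite_eq' F (x t)
      (fun _ => φ (x (t+1)) - φ (x t)), if_pos hxt, ← ih F hFt]
    ring
end Telescope


/-- **Occupation frequencies** (Theorem `stat-vec`). -/
theorem rotor_occupation_frequencies {V : Type*} [Countable V]
    (d : V → ℕ) (succ : V → ℕ → V) (p : V → V → ℝ)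
    (hreal : Realizes d succ p)
    (hirr : IrreducibleKernel p) (hrec : RecurrentKernel p)
    (π : V → ℝ) (hπpos : ∀ v, 0 < π v)
    (hπ : ∀ v, HasSum (fun u => π u * p u v) (π v))
    (b c : V) (hbc : b ≠ c)
    (h : V → ℝ) (hh : h = hitProb p b c)
    (K₃ : ℝ)
    (hsum : Summable fun uv : V × V =>
      (d uv.1 : ℝ) * p uv.1 uv.2 * |h uv.1 - h uv.2|)
    (hK₃ : K₃ = 1 + (1 / 2) * ((d b : ℝ) + (d c : ℝ) +
      ∑' uv : V × V, (d uv.1 : ℝ) * p uv.1 uv.2 * |h uv.1 - h uv.2|))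
    (x : ℕ → V) (r : ℕ → V → ℕ) (hwalk : IsRotorWalk d succ x r)
    (t : ℕ) :
    |(nvisits x t b : ℝ) / π b - (nvisits x t c : ℝ) / π c| ≤
      K₃ / (π b * escProb p b c) := by
    classical
  subst hh
  set φ : V → ℝ := hitProb p b c with hφ
  set e := escProb p b c with he_def
  set e' := escProb p c b with he'_def
  have hd := hreal.1
  have hepos : 0 < e := escProb_pos hreal hirr hbc
  have he'pos : 0 < e' := escProb_pos hreal hirr (Ne.symm hbc)
  have hfl1 : π c * e' ≤ π b * e := flux_le hreal hirr hrec hπpos hπ hbc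
  have hfl2 : π b * e ≤ π c * e' := flux_le hreal hirr hrec hπpos hπ (Ne.symm hbc)
  have hflux : π b * e = π c * e' := le_antisymm hfl2 hfl1
  have hφb : φ b = 1 := hitProb_base
  have hφc : φ c = 0 := hitProb_target (Ne.symm hbc)
  have hφ0 : ∀ v, 0 ≤ φ v := fun v => hitProb_nonneg hreal v
  have hφ1 : ∀ v, φ v ≤ 1 := fun v => hitProb_le_one hreal v
  have hrowb : ∑' w, p b w * φ w = 1 - e := by
    have h0 := escProb_eq hreal hirr hrec hbc
    rw [← he_def] at h0
    linarith
  have hrowc : ∑' w, p c w * φ w = e' := rfl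
  have htsum0 : ∀ u, 0 ≤ ∑' w, p u w * φ w :=
    fun u => tsum_nonneg fun w => mul_nonneg (hreal.nonneg u w) (hφ0 w)
  have he1 : e ≤ 1 := by
    have := htsum0 b
    rw [hrowb] at this
    linarith
  have he'1 : e' ≤ 1 := by
    rw [← hrowc, hreal.tsum_mul, div_le_one (by exact_mod_cast hd c)]
    calc (∑ i ∈ Finset.range (d c), φ (succ c i))
        ≤ ∑ i ∈ Finset.range (d c), 1 := Finset.sum_le_sum fun i _ => hφ1 _
      _ = (d c : ℝ) := by simp
  -- the finite set of relevant vertices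
  set F : Finset V := ((Finset.range t).image x) ∪ {b, c} with hF
  have hbF : b ∈ F := by simp [hF]
  have hcF : c ∈ F := by simp [hF]
  have hsubF : ({b, c} : Finset V) ⊆ F := Finset.subset_union_right
  have hvisF : ∀ s, s < t → x s ∈ F := fun s hs =>
    Finset.mem_union_left _ (Finset.mem_image.mpr ⟨s, Finset.mem_range.mpr hs, rfl⟩)
  -- per-vertex data
  set A : V → ℝ := fun u => ∑ i ∈ Finset.range (d u), (φ (succ u i) - φ u) with hA
  set B : V → ℝ :=
    fun u => (1/2) * ∑ i ∈ Finset.range (d u), |(φ (succ u i) - φ u) - A u / d u| with hB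
  set W : V → ℝ := fun u => ∑ j ∈ Finset.range (nvisits x t u),
    (φ (succ u ((r 0 u + 1 + j) % d u)) - φ u) with hW
  have hAu : ∀ u, A u = ∑ i ∈ Finset.range (d u), (φ (succ u i) - φ u) := fun u => rfl
  have hBu : ∀ u, B u
      = (1/2) * ∑ i ∈ Finset.range (d u), |(φ (succ u i) - φ u) - A u / d u| := fun u => rfl
  have hWu : ∀ u, W u = ∑ j ∈ Finset.range (nvisits x t u),
      (φ (succ u ((r 0 u + 1 + j) % d u)) - φ u) := fun u => rfl
  have hdne : ∀ u, (d u : ℝ) ≠ 0 := fun u => by exact_mod_cast (hd u).ne'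
  have hAval : ∀ u, A u = (d u : ℝ) * (∑' w, p u w * φ w) - d u * φ u := by
    intro u
    rw [hAu u, Finset.sum_sub_distrib, Finset.sum_const, Finset.card_range, nsmul_eq_mul,
      hreal.tsum_mul u φ]
    congr 1
    rw [mul_comm, div_mul_cancel₀ _ (hdne u)]
  have hA0 : ∀ u, u ≠ b → u ≠ c → A u = 0 := by
    intro u hub huc
    rw [hAval, ← hitProb_harmonic hreal hub huc]
    ring
  have hAb : A b = -((d b : ℝ) * e) := by rw [hAval, hrowb, hφb]; ring
  have hAc : A c = (d c : ℝ) * e' := by rw [hAval, hrowc, hφc]; ring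
  have hAbd : A b / d b = -e := by rw [hAb, neg_div, mul_comm, mul_div_assoc, div_self (hdne b), mul_one]
  have hAcd : A c / d c = e' := by rw [hAc, mul_comm, mul_div_assoc, div_self (hdne c), mul_one]
  -- the rotor bound per vertex
  have hWbound : ∀ u, |W u - (nvisits x t u : ℝ) * (A u / d u)| ≤ B u := by
    intro u
    set g : ℕ → ℝ := fun i => (φ (succ u i) - φ u) - A u / d u with hg
    have hgsum : ∑ i ∈ Finset.range (d u), g i = 0 := by
      have hXA : ∑ i ∈ Finset.range (d u), (φ (succ u i) - φ u) = A u := rfl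
      rw [hg]
      rw [Finset.sum_sub_distrib, hXA, Finset.sum_const, Finset.card_range, nsmul_eq_mul,
        mul_comm, div_mul_cancel₀ _ (hdne u), sub_self]
    have hrb := rot_bound g (r 0 u + 1) (d u) (hd u) hgsum (nvisits x t u)
    have hre : W u - (nvisits x t u : ℝ) * (A u / d u)
        = ∑ j ∈ Finset.range (nvisits x t u), g ((r 0 u + 1 + j) % d u) := by
      have hrhs : ∑ j ∈ Finset.range (nvisits x t u), g ((r 0 u + 1 + j) % d u)
          = (∑ j ∈ Finset.range (nvisits x t u),
              (φ (succ u ((r 0 u + 1 + j) % d u)) - φ u))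
            - (nvisits x t u : ℝ) * (A u / d u) := by
        simp only [hg]
        rw [Finset.sum_sub_distrib, Finset.sum_const, Finset.card_range, nsmul_eq_mul]
      rw [hrhs, hWu u]
    rw [hre, hBu u]
    exact hrb
  -- telescoping
  have htel : φ (x t) - φ (x 0) = ∑ u ∈ F, W u := rotor_telescope hwalk φ t F hvisF
  -- the drift sum
  have hAsum : ∑ u ∈ F, (nvisits x t u : ℝ) * (A u / d u)
      = -((nvisits x t b : ℝ) * e) + (nvisits x t c : ℝ) * e' := by
    rw [← Finset.sum_subset hsubF (fun u hu hnot => ?_)]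
    · rw [Finset.sum_pair hbc, hAbd, hAcd]
      ring
    · have hub : u ≠ b := by rintro rfl; exact hnot (by simp)
      have huc : u ≠ c := by rintro rfl; exact hnot (by simp)
      rw [hA0 u hub huc]
      simp
  -- error bounds
  have h2 : |φ (x t) - φ (x 0)| ≤ 1 := by
    rw [abs_le]
    constructor
    · linarith [hφ0 (x t), hφ1 (x 0)]
    · linarith [hφ1 (x t), hφ0 (x 0)]
  have hBb : B b ≤ (1/2) * d b := by
    rw [hBu b]
    refine mul_le_mul_of_nonneg_left ?_ (by norm_num)
    calc ∑ i ∈ Finset.range (d b), |(φ (succ b i) - φ b) - A b / d b|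
        ≤ ∑ i ∈ Finset.range (d b), 1 := by
          refine Finset.sum_le_sum fun i _ => ?_
          rw [hAbd, hφb, abs_le]
          constructor
          · linarith [hφ0 (succ b i), hepos.le]
          · linarith [hφ1 (succ b i), he1]
      _ = (d b : ℝ) := by simp
  have hBc : B c ≤ (1/2) * d c := by
    rw [hBu c]
    refine mul_le_mul_of_nonneg_left ?_ (by norm_num)
    calc ∑ i ∈ Finset.range (d c), |(φ (succ c i) - φ c) - A c / d c|
        ≤ ∑ i ∈ Finset.range (d c), 1 := by
          refine Finset.sum_le_sum fun i _ => ?_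
          rw [hAcd, hφc, abs_le]
          constructor
          · linarith [hφ0 (succ c i), he'1]
          · linarith [hφ1 (succ c i), he'pos.le]
      _ = (d c : ℝ) := by simp
  set G : V → ℝ := fun u => ∑' v, (d u : ℝ) * p u v * |φ u - φ v| with hG
  have hGu0 : ∀ u, G u = ∑' v, (d u : ℝ) * p u v * |φ u - φ v| := fun u => rfl
  have hGval : ∀ u, G u = ∑ i ∈ Finset.range (d u), |φ (succ u i) - φ u| := by
    intro u
    rw [hGu0 u]
    simp only [mul_assoc]
    rw [tsum_mul_left, hreal.tsum_mul u (fun v => |φ u - φ v|), mul_comm,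
      div_mul_cancel₀ _ (hdne u)]
    exact Finset.sum_congr rfl fun i _ => abs_sub_comm _ _
  have hBother : ∀ u, u ≠ b → u ≠ c → B u = (1/2) * G u := by
    intro u hub huc
    rw [hGval u, hBu u]
    congr 1
    refine Finset.sum_congr rfl fun i _ => ?_
    rw [hA0 u hub huc, zero_div, sub_zero]
  have hGsum : ∑ u ∈ F \ {b, c}, G u
      ≤ ∑' uv : V × V, (d uv.1 : ℝ) * p uv.1 uv.2 * |φ uv.1 - φ uv.2| := by
    set T : Finset V := (F \ {b, c}).biUnion (fun u => (Finset.range (d u)).image (succ u))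
      with hT
    have hnn : ∀ uv : V × V, 0 ≤ (d uv.1 : ℝ) * p uv.1 uv.2 * |φ uv.1 - φ uv.2| :=
      fun uv => mul_nonneg (mul_nonneg (Nat.cast_nonneg _) (hreal.nonneg _ _)) (abs_nonneg _)
    have hGu : ∀ u ∈ F \ {b, c}, G u = ∑ v ∈ T, (d u : ℝ) * p u v * |φ u - φ v| := by
      intro u hu
      rw [hGu0 u]
      refine tsum_eq_sum fun v hv => ?_
      have hv' : v ∉ (Finset.range (d u)).image (succ u) :=
        fun hmem => hv (Finset.mem_biUnion.mpr ⟨u, hu, hmem⟩)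
      rw [hreal.eq_zero_of_not_mem hv']
      ring
    rw [Finset.sum_congr rfl hGu]
    calc ∑ u ∈ F \ {b, c}, ∑ v ∈ T, (d u : ℝ) * p u v * |φ u - φ v|
        = ∑ uv ∈ (F \ {b, c}) ×ˢ T, (d uv.1 : ℝ) * p uv.1 uv.2 * |φ uv.1 - φ uv.2| := by
          rw [Finset.sum_product]
      _ ≤ ∑' uv : V × V, (d uv.1 : ℝ) * p uv.1 uv.2 * |φ uv.1 - φ uv.2| :=
          Summable.sum_le_tsum _ (fun uv _ => hnn uv) hsum
  have hBsum : ∑ u ∈ F, B u ≤ (1/2) * ((d b : ℝ) + d c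
      + ∑' uv : V × V, (d uv.1 : ℝ) * p uv.1 uv.2 * |φ uv.1 - φ uv.2|) := by
    rw [← Finset.sum_sdiff hsubF, Finset.sum_pair hbc]
    have h3 : ∑ u ∈ F \ {b, c}, B u = (1/2) * ∑ u ∈ F \ {b, c}, G u := by
      rw [Finset.mul_sum]
      refine Finset.sum_congr rfl fun u hu => ?_
      have hu2 := (Finset.mem_sdiff.mp hu).2
      have hub : u ≠ b := by rintro rfl; exact hu2 (by simp)
      have huc : u ≠ c := by rintro rfl; exact hu2 (by simp)
      exact hBother u hub huc
    rw [h3]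
    linarith [hGsum, hBb, hBc]
  -- main discrepancy bound
  have hmain : |(nvisits x t b : ℝ) * e - (nvisits x t c : ℝ) * e'| ≤ K₃ := by
    have hD : (nvisits x t b : ℝ) * e - (nvisits x t c : ℝ) * e'
        = (∑ u ∈ F, (W u - (nvisits x t u : ℝ) * (A u / d u))) - (φ (x t) - φ (x 0)) := by
      rw [Finset.sum_sub_distrib, ← htel, hAsum]
      ring
    have h1 : |∑ u ∈ F, (W u - (nvisits x t u : ℝ) * (A u / d u))| ≤ ∑ u ∈ F, B u :=
      (Finset.abs_sum_le_sum_abs _ _).trans (Finset.sum_le_sum fun u _ => hWbound u)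
    have habs : |(∑ u ∈ F, (W u - (nvisits x t u : ℝ) * (A u / d u))) - (φ (x t) - φ (x 0))|
        ≤ |∑ u ∈ F, (W u - (nvisits x t u : ℝ) * (A u / d u))| + |φ (x t) - φ (x 0)| := by
      calc |(∑ u ∈ F, (W u - (nvisits x t u : ℝ) * (A u / d u))) - (φ (x t) - φ (x 0))|
          = |(∑ u ∈ F, (W u - (nvisits x t u : ℝ) * (A u / d u))) + -(φ (x t) - φ (x 0))| := by
            rw [sub_eq_add_neg]
        _ ≤ |∑ u ∈ F, (W u - (nvisits x t u : ℝ) * (A u / d u))| + |-(φ (x t) - φ (x 0))| :=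
            abs_add_le _ _
        _ = |∑ u ∈ F, (W u - (nvisits x t u : ℝ) * (A u / d u))| + |φ (x t) - φ (x 0)| := by
            rw [abs_neg]
    rw [hD, hK₃]
    calc |(∑ u ∈ F, (W u - (nvisits x t u : ℝ) * (A u / d u))) - (φ (x t) - φ (x 0))|
        ≤ |∑ u ∈ F, (W u - (nvisits x t u : ℝ) * (A u / d u))| + |φ (x t) - φ (x 0)| := habs
      _ ≤ ∑ u ∈ F, B u + 1 := add_le_add h1 h2
      _ ≤ 1 + (1/2) * ((d b : ℝ) + d c
          + ∑' uv : V × V, (d uv.1 : ℝ) * p uv.1 uv.2 * |φ uv.1 - φ uv.2|) := by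
          linarith [hBsum]
  -- final conversion
  have hden : 0 < π b * e := mul_pos (hπpos b) hepos
  have heq : (nvisits x t b : ℝ) / π b - (nvisits x t c : ℝ) / π c
      = ((nvisits x t b : ℝ) * e - (nvisits x t c : ℝ) * e') / (π b * e) := by
    have e1 : (nvisits x t b : ℝ) / π b = ((nvisits x t b : ℝ) * e) / (π b * e) := by
      rw [mul_div_mul_right _ _ hepos.ne']
    have e2 : (nvisits x t c : ℝ) / π c = ((nvisits x t c : ℝ) * e') / (π b * e) := by
      rw [hflux, mul_div_mul_right _ _ he'pos.ne']
    rw [e1, e2, div_sub_div_same]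
  rw [heq, abs_div, abs_of_pos hden]
  exact div_le_div_of_nonneg_right hmain hden.le
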